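/- arXiv:1008.4167 — 2 statements merged into one kernel-verified Lean document; each statement's English description precedes it below -/
import Mathlib

section
/- Let β > 1 be a real number and let a be the β-expansion of β. Then: (i) every word v with B̂(v) ≤ β satisfies v ≤ a lexicographically; (ii) every word v with B̂(v) < β satisfies v < a lexicographically; (iii) for every k ≥ 1, B̂(σ^k a) < β and σ^k a < a lexicographically. -/
/-- The shift map iterated `k` times: `(shift k w) i = w (i + k)`,
so `shift k w = w_k w_{k+1} w_{k+2} …`. -/
def shift (k : ℕ) (w : ℕ → ℕ) : ℕ → ℕ := fun i => w (i + k)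

/-- Strict lexicographic order on infinite words: `v < w` iff there is an index `i`
with `v j = w j` for all `j < i` and `v i < w i`. -/
def LexLt (v w : ℕ → ℕ) : Prop := ∃ i, (∀ j < i, v j = w j) ∧ v i < w i

/-- Weak lexicographic order: `v ≤ w` iff `v < w` or `v = w`. -/
def LexLe (v w : ℕ → ℕ) : Prop := LexLt v w ∨ v = w

/-- A word is a bounded sequence of natural numbers. -/
def IsWord (w : ℕ → ℕ) : Prop := ∃ M, ∀ i, w i ≤ M

/-- `fword w β = ∑_{i ≥ 0} w_i β^{-(i+1)} = w_0/β + w_1/β² + …`. -/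
noncomputable def fword (w : ℕ → ℕ) (β : ℝ) : ℝ := ∑' i : ℕ, (w i : ℝ) / β ^ (i + 1)

open Classical in
/-- `B̂(w)`: zero for the zero word, and otherwise `inf {β > 1 : f_w(β) ≤ 1}`. -/
noncomputable def Bhat (w : ℕ → ℕ) : ℝ :=
  if w = fun _ => 0 then 0 else sInf {β : ℝ | 1 < β ∧ fword w β ≤ 1}

/-- `B̄(w) = sup_{j ≥ 0} B̂(σ^j w)`. -/
noncomputable def Bbar (w : ℕ → ℕ) : ℝ := ⨆ j : ℕ, Bhat (shift j w)

/-- The sequence `A_i` in the β-expansion of `β`: `A_0 = β`, `A_{i+1} = β (A_i - ⌊A_i⌋)`. -/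
noncomputable def betaA (β : ℝ) : ℕ → ℝ
  | 0 => β
  | i + 1 => β * (betaA β i - (⌊betaA β i⌋₊ : ℝ))

/-- The β-expansion of `β`: the word `a` with `a_i = ⌊A_i⌋`. -/
noncomputable def betaExp (β : ℝ) : ℕ → ℕ := fun i => ⌊betaA β i⌋₊

/-- The domain `W(β)` of the β-shift: all words `w` with `σ^k w < a` lexicographically
for every `k ≥ 0`, where `a` is the β-expansion of `β`. -/
def Wset (β : ℝ) : Set (ℕ → ℕ) :=
  {w | IsWord w ∧ ∀ k : ℕ, LexLt (shift k w) (betaExp β)}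

/-- `π` is a permutation of `{1, …, n}` (viewed as a map `ℕ → ℕ`). -/
def IsPerm (n : ℕ) (π : ℕ → ℕ) : Prop := Set.BijOn π (Set.Icc 1 n) (Set.Icc 1 n)

/-- The word `w` induces the permutation `π` of `{1, …, n}`: for all `1 ≤ i, j ≤ n`,
`π(i) < π(j)` iff `σ^{i-1} w < σ^{j-1} w` lexicographically. -/
def Induces (n : ℕ) (w : ℕ → ℕ) (π : ℕ → ℕ) : Prop :=
  ∀ i ∈ Set.Icc 1 n, ∀ j ∈ Set.Icc 1 n,
    (π i < π j ↔ LexLt (shift (i - 1) w) (shift (j - 1) w))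

/-- `π ∈ Al(Σ_β)`: some word in `W(β)` induces `π`. -/
def Allowed (β : ℝ) (n : ℕ) (π : ℕ → ℕ) : Prop := ∃ w ∈ Wset β, Induces n w π

/-- The shift-complexity `B(π) = inf {β > 1 : π ∈ Al(Σ_β)}`. -/
noncomputable def Bperm (n : ℕ) (π : ℕ → ℕ) : ℝ :=
  sInf {β : ℝ | 1 < β ∧ Allowed β n π}

/-- `ρ_m` is the permutation `1 m 2 (m-1) 3 (m-2) …` of `{1, …, m}`:
`ρ(2i-1) = i` and `ρ(2i) = m+1-i`. -/
def IsRho (m : ℕ) (ρ : ℕ → ℕ) : Prop :=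
  IsPerm m ρ ∧ (∀ i, 1 ≤ i → 2 * i - 1 ≤ m → ρ (2 * i - 1) = i) ∧
    (∀ i, 1 ≤ i → 2 * i ≤ m → ρ (2 * i) = m + 1 - i)

open Filter Topology
section AuxStmt15
variable {β : ℝ}

lemma summable_word {w : ℕ → ℕ} {M : ℕ} (hM : ∀ i, w i ≤ M) (hβ : 1 < β) :
    Summable (fun i : ℕ => (w i : ℝ) / β ^ (i + 1)) := by
  have hb0 : (0:ℝ) < β := lt_trans one_pos hβ
  have hgeo : Summable (fun i : ℕ => ((M : ℝ) * β⁻¹) * β⁻¹ ^ i) :=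
    (summable_geometric_of_lt_one (by positivity) (inv_lt_one_of_one_lt₀ hβ)).mul_left _
  refine Summable.of_nonneg_of_le (fun i => by positivity) (fun i => ?_) hgeo
  calc (w i : ℝ) / β ^ (i+1) ≤ (M:ℝ) / β ^ (i+1) := by
        gcongr; exact_mod_cast hM i
    _ = ((M:ℝ) * β⁻¹) * β⁻¹ ^ i := by
        rw [div_eq_mul_inv, ← inv_pow, pow_succ]; ring

lemma betaA_nonneg (hβ : 1 < β) : ∀ i, 0 ≤ betaA β i
  | 0 => le_of_lt (lt_trans one_pos hβ)
  | (i+1) => by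
      have h := betaA_nonneg hβ i
      have h2 : (⌊betaA β i⌋₊ : ℝ) ≤ betaA β i := Nat.floor_le h
      have hb0 : (0:ℝ) ≤ β := by linarith
      simpa [betaA] using mul_nonneg hb0 (by linarith)

lemma betaA_lt (hβ : 1 < β) (i : ℕ) : betaA β (i+1) < β := by
  have hfrac : betaA β i - (⌊betaA β i⌋₊:ℝ) < 1 := by
    have := Nat.lt_floor_add_one (betaA β i); linarith
  have hb0 : (0:ℝ) < β := lt_trans one_pos hβ
  calc betaA β (i+1) = β * (betaA β i - (⌊betaA β i⌋₊:ℝ)) := by rw [betaA]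
    _ < β * 1 := by exact mul_lt_mul_of_pos_left hfrac hb0
    _ = β := mul_one β

lemma betaA_le (hβ : 1 < β) : ∀ i, betaA β i ≤ β
  | 0 => le_refl β
  | (i+1) => le_of_lt (betaA_lt hβ i)

lemma betaA_identity (hβ : 1 < β) (k : ℕ) : ∀ n : ℕ,
    betaA β k / β = (∑ i ∈ Finset.range n, (betaExp β (k + i) : ℝ) / β ^ (i+1))
      + betaA β (k + n) / β ^ (n+1)
  | 0 => by simp
  | (n+1) => by
      have ih := betaA_identity hβ k n
      have hb0 : (0:ℝ) < β := lt_trans one_pos hβ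
      have hbne : β ≠ 0 := ne_of_gt hb0
      have hpne : β ^ (n+1) ≠ 0 := pow_ne_zero _ hbne
      rw [Finset.sum_range_succ, ih]
      have hA : betaA β (k + (n+1)) = β * (betaA β (k+n) - (betaExp β (k+n) : ℝ)) := by
        rw [show k + (n+1) = (k+n)+1 from rfl, betaA]; rfl
      have key : betaA β (k+n) / β ^ (n+1)
          = (betaExp β (k+n) : ℝ) / β ^ (n+1) + betaA β (k + (n+1)) / β ^ (n+1+1) := by
        rw [hA]; field_simp; ring
      rw [key]; ring

lemma betaExp_le (hβ : 1 < β) (i : ℕ) : betaExp β i ≤ ⌊β⌋₊ :=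
  Nat.floor_le_floor (betaA_le hβ i)

lemma fword_shift_eq (hβ : 1 < β) (k : ℕ) :
    fword (shift k (betaExp β)) β = betaA β k / β := by
  have hb0 : (0:ℝ) < β := lt_trans one_pos hβ
  have hsum : Summable (fun i : ℕ => ((shift k (betaExp β)) i : ℝ) / β ^ (i+1)) :=
    summable_word (M := ⌊β⌋₊) (fun i => betaExp_le hβ _) hβ
  have h1 : Tendsto (fun n => ∑ i ∈ Finset.range n, ((shift k (betaExp β)) i : ℝ)/β^(i+1))
      atTop (𝓝 (fword (shift k (betaExp β)) β)) := hsum.hasSum.tendsto_sum_nat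
  have heq : ∀ n, ∑ i ∈ Finset.range n, ((shift k (betaExp β)) i : ℝ)/β^(i+1)
      = betaA β k / β - betaA β (k+n)/β^(n+1) := by
    intro n
    have hid := betaA_identity hβ k n
    have hsame : ∑ i ∈ Finset.range n, ((shift k (betaExp β)) i : ℝ)/β^(i+1)
        = ∑ i ∈ Finset.range n, (betaExp β (k + i) : ℝ)/β^(i+1) :=
      Finset.sum_congr rfl (fun i _ => by rw [shift, Nat.add_comm])
    rw [hsame]; linarith
  have hg0 : Tendsto (fun n : ℕ => betaA β (k+n)/β^(n+1)) atTop (𝓝 0) := by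
    have hb : Tendsto (fun n : ℕ => β * β⁻¹^(n+1)) atTop (𝓝 0) := by
      have := tendsto_pow_atTop_nhds_zero_of_lt_one (by positivity : (0:ℝ) ≤ β⁻¹)
        (inv_lt_one_of_one_lt₀ hβ)
      simpa using (this.comp (tendsto_add_atTop_nat 1)).const_mul β
    refine squeeze_zero (fun n => div_nonneg (betaA_nonneg hβ _) (by positivity))
      (fun n => ?_) hb
    calc betaA β (k+n)/β^(n+1) ≤ β / β^(n+1) := by gcongr; exact betaA_le hβ _
      _ = β * β⁻¹^(n+1) := by rw [div_eq_mul_inv, inv_pow]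
  have h2 : Tendsto (fun n => ∑ i ∈ Finset.range n, ((shift k (betaExp β)) i : ℝ)/β^(i+1))
      atTop (𝓝 (betaA β k / β)) := by
    simp only [heq]
    simpa using tendsto_const_nhds.sub hg0
  exact tendsto_nhds_unique h1 h2

lemma fword_betaExp (hβ : 1 < β) : fword (betaExp β) β = 1 := by
  have h := fword_shift_eq hβ 0
  have : fword (shift 0 (betaExp β)) β = fword (betaExp β) β := rfl
  rw [this] at h
  rw [h]
  show betaA β 0 / β = 1
  rw [betaA]
  exact div_self (ne_of_gt (lt_trans one_pos hβ))

lemma fword_anti {v : ℕ → ℕ} {M : ℕ} (hM : ∀ i, v i ≤ M) {γ : ℝ} (hγ : 1 < γ)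
    (hγβ : γ ≤ β) : fword v β ≤ fword v γ := by
  have hβ : 1 < β := lt_of_lt_of_le hγ hγβ
  have hg0 : (0:ℝ) < γ := lt_trans one_pos hγ
  refine Summable.tsum_le_tsum (fun i => ?_) (summable_word hM hβ) (summable_word hM hγ)
  gcongr

lemma fword_strict_anti {v : ℕ → ℕ} {M : ℕ} (hM : ∀ i, v i ≤ M) {γ : ℝ}
    (hγ : 1 < γ) (hγβ : γ < β) {i0 : ℕ} (h0 : 0 < v i0) :
    fword v β < fword v γ := by
  have hβ : 1 < β := lt_trans hγ hγβ
  have hg0 : (0:ℝ) < γ := lt_trans one_pos hγ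
  have hb0 : (0:ℝ) < β := lt_trans one_pos hβ
  have hsγ := summable_word hM hγ
  have hsβ := summable_word hM hβ
  have key : fword v γ - fword v β
      = ∑' i, ((v i:ℝ)/γ^(i+1) - (v i:ℝ)/β^(i+1)) := (Summable.tsum_sub hsγ hsβ).symm
  have hterm : (v i0:ℝ)/γ^(i0+1) - (v i0:ℝ)/β^(i0+1)
      ≤ ∑' i, ((v i:ℝ)/γ^(i+1) - (v i:ℝ)/β^(i+1)) := by
    refine Summable.le_tsum (hsγ.sub hsβ) i0 (fun j _ => ?_)
    have : (v j:ℝ)/β^(j+1) ≤ (v j:ℝ)/γ^(j+1) := by gcongr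
    linarith
  have hpos : (v i0:ℝ)/β^(i0+1) < (v i0:ℝ)/γ^(i0+1) := by
    have hv : (0:ℝ) < v i0 := by exact_mod_cast h0
    exact div_lt_div_of_pos_left hv (by positivity) (by gcongr)
  linarith

lemma tendsto_fword {v : ℕ → ℕ} {M : ℕ} (hM : ∀ i, v i ≤ M) {γ₀ : ℝ} (h1 : 1 < γ₀)
    (hγβ : γ₀ ≤ β) {l : Filter ℝ} (hl : l ≤ 𝓝 β) (hev : ∀ᶠ γ in l, γ₀ ≤ γ) :
    Tendsto (fun γ => fword v γ) l (𝓝 (fword v β)) := by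
  have hβ1 : 1 < β := lt_of_lt_of_le h1 hγβ
  have hb0 : (0:ℝ) < β := lt_trans one_pos hβ1
  have hγ00 : (0:ℝ) < γ₀ := lt_trans one_pos h1
  unfold fword
  refine tendsto_tsum_of_dominated_convergence
    (f := fun γ (i : ℕ) => (v i : ℝ) / γ ^ (i+1)) (bound := fun i => (M:ℝ)/γ₀^(i+1)) ?_ ?_ ?_
  · exact summable_word (w := fun _ => M) (fun i => le_rfl) h1
  · intro i
    have hid : Tendsto (fun γ : ℝ => γ) l (𝓝 β) := tendsto_id'.mpr hl
    exact Tendsto.div tendsto_const_nhds (hid.pow (i+1)) (by positivity)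
  · filter_upwards [hev] with γ hγ i
    have hγ0 : (0:ℝ) < γ := lt_of_lt_of_le hγ00 hγ
    rw [Real.norm_eq_abs, abs_of_nonneg (by positivity)]
    gcongr
    exact_mod_cast hM i

lemma S_bddBelow (v : ℕ → ℕ) : BddBelow {γ : ℝ | 1 < γ ∧ fword v γ ≤ 1} :=
  ⟨1, fun x hx => le_of_lt hx.1⟩

lemma S_nonempty {v : ℕ → ℕ} {M : ℕ} (hM : ∀ i, v i ≤ M) :
    Set.Nonempty {γ : ℝ | 1 < γ ∧ fword v γ ≤ 1} := by
  have hγ : (1:ℝ) < (M:ℝ)+2 := by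
    have : (0:ℝ) ≤ (M:ℝ) := Nat.cast_nonneg M
    linarith
  have hγ0 : (0:ℝ) < (M:ℝ)+2 := lt_trans one_pos hγ
  refine ⟨(M:ℝ)+2, hγ, ?_⟩
  have h1 : fword v ((M:ℝ)+2) ≤ ∑' i:ℕ, (M:ℝ)/((M:ℝ)+2)^(i+1) := by
    refine Summable.tsum_le_tsum (fun i => ?_) (summable_word hM hγ)
      (summable_word (w := fun _ => M) (fun i => le_rfl) hγ)
    gcongr
    exact_mod_cast hM i
  have hinv : ((M:ℝ)+2)⁻¹ < 1 := inv_lt_one_of_one_lt₀ hγ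
  have h2 : ∑' i:ℕ, (M:ℝ)/((M:ℝ)+2)^(i+1) = (M:ℝ)/((M:ℝ)+1) := by
    have e1 : ∀ i : ℕ, (M:ℝ)/((M:ℝ)+2)^(i+1) = ((M:ℝ)*((M:ℝ)+2)⁻¹) * (((M:ℝ)+2)⁻¹)^i := by
      intro i
      rw [div_eq_mul_inv, ← inv_pow, pow_succ]; ring
    rw [tsum_congr e1, tsum_mul_left, tsum_geometric_of_lt_one (by positivity) hinv]
    have h3 : (1:ℝ) - ((M:ℝ)+2)⁻¹ = ((M:ℝ)+1)/((M:ℝ)+2) := by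
      rw [eq_div_iff (by positivity : ((M:ℝ)+2) ≠ 0)]
      field_simp
      ring
    rw [h3, inv_div]
    have hM1 : (0:ℝ) < (M:ℝ)+1 := by positivity
    field_simp
  refine le_trans (h1.trans h2.le) ?_
  rw [div_le_one (by positivity)]
  linarith

lemma fword_le_one_of_Bhat_le {v : ℕ → ℕ} {M : ℕ} (hM : ∀ i, v i ≤ M)
    (hv : v ≠ fun _ => 0) (hβ : 1 < β) (h : Bhat v ≤ β) : fword v β ≤ 1 := by
  rw [Bhat, if_neg hv] at h
  have hub : ∀ γ : ℝ, β < γ → fword v γ ≤ 1 := by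
    intro γ hγ
    obtain ⟨s, hs, hsγ⟩ := exists_lt_of_csInf_lt (S_nonempty hM) (lt_of_le_of_lt h hγ)
    exact le_trans (fword_anti hM hs.1 hsγ.le) hs.2
  have htt : Tendsto (fun γ => fword v γ) (𝓝[>] β) (𝓝 (fword v β)) :=
    tendsto_fword hM hβ le_rfl nhdsWithin_le_nhds
      (by filter_upwards [self_mem_nhdsWithin] with γ (hγ : β < γ); exact hγ.le)
  refine le_of_tendsto htt ?_
  filter_upwards [self_mem_nhdsWithin] with γ (hγ : β < γ)
  exact hub γ hγ

lemma fword_lt_one_of_Bhat_lt {v : ℕ → ℕ} {M : ℕ} (hM : ∀ i, v i ≤ M)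
    (hv : v ≠ fun _ => 0) (hβ : 1 < β) (h : Bhat v < β) : fword v β < 1 := by
  rw [Bhat, if_neg hv] at h
  obtain ⟨s, hs, hsβ⟩ := exists_lt_of_csInf_lt (S_nonempty hM) h
  obtain ⟨i0, hi0⟩ := Function.ne_iff.mp hv
  exact lt_of_lt_of_le (fword_strict_anti hM hs.1 hsβ (Nat.pos_of_ne_zero hi0)) hs.2

lemma Bhat_lt_of_fword_lt {v : ℕ → ℕ} {M : ℕ} (hM : ∀ i, v i ≤ M)
    (hβ : 1 < β) (h : fword v β < 1) : Bhat v < β := by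
  by_cases hv : v = fun _ => 0
  · rw [Bhat, if_pos hv]; linarith
  rw [Bhat, if_neg hv]
  set γ₀ := (1+β)/2 with hγ₀def
  have h1 : 1 < γ₀ := by rw [hγ₀def]; linarith
  have hγβ : γ₀ < β := by rw [hγ₀def]; linarith
  have hev : ∀ᶠ γ in 𝓝[<] β, γ₀ ≤ γ :=
    Filter.Eventually.filter_mono nhdsWithin_le_nhds
      ((eventually_gt_nhds hγβ).mono (fun γ hγ => hγ.le))
  have htt : Tendsto (fun γ => fword v γ) (𝓝[<] β) (𝓝 (fword v β)) :=
    tendsto_fword hM h1 hγβ.le nhdsWithin_le_nhds hev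
  have hlt : ∀ᶠ γ in 𝓝[<] β, fword v γ < 1 := htt.eventually (eventually_lt_nhds h)
  have hmem : ∀ᶠ γ in 𝓝[<] β, γ < β := self_mem_nhdsWithin
  obtain ⟨γ, ⟨hγ₀γ, hγ1⟩, hγβ'⟩ := ((hev.and hlt).and hmem).exists
  exact lt_of_le_of_lt (csInf_le (S_bddBelow v) ⟨lt_of_lt_of_le h1 hγ₀γ, hγ1.le⟩) hγβ'

lemma lex_trichotomy (v w : ℕ → ℕ) : LexLt v w ∨ v = w ∨ LexLt w v := by
  by_cases h : v = w
  · exact Or.inr (Or.inl h)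
  have hne : ∃ i, v i ≠ w i := Function.ne_iff.mp h
  classical
  have hi : v (Nat.find hne) ≠ w (Nat.find hne) := Nat.find_spec hne
  have hlt : ∀ j < Nat.find hne, v j = w j := fun j hj => not_not.mp (Nat.find_min hne hj)
  rcases lt_or_gt_of_ne hi with h1 | h1
  · exact Or.inl ⟨Nat.find hne, hlt, h1⟩
  · exact Or.inr (Or.inr ⟨Nat.find hne, fun j hj => (hlt j hj).symm, h1⟩)

lemma one_lt_fword_of_lex_gt {v : ℕ → ℕ} {M : ℕ} (hM : ∀ i, v i ≤ M) (hβ : 1 < β)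
    (h : LexLt (betaExp β) v) : 1 < fword v β := by
  obtain ⟨i, hpre, hi⟩ := h
  have hb0 : (0:ℝ) < β := lt_trans one_pos hβ
  have hsum := summable_word hM hβ
  have hpart : ∑ j ∈ Finset.range (i+1), (v j:ℝ)/β^(j+1) ≤ fword v β :=
    Summable.sum_le_tsum _ (fun j _ => by positivity) hsum
  have hid := betaA_identity hβ 0 i
  simp only [Nat.zero_add] at hid
  have h00 : betaA β 0 / β = 1 := by rw [betaA]; exact div_self (ne_of_gt hb0)
  rw [h00] at hid
  have hAi : betaA β i < (betaExp β i : ℝ) + 1 := by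
    have := Nat.lt_floor_add_one (betaA β i)
    rw [betaExp]; push_cast; linarith
  have hkey : 1 < ∑ j ∈ Finset.range (i+1), (v j:ℝ)/β^(j+1) := by
    rw [Finset.sum_range_succ]
    have hsumeq : ∑ j ∈ Finset.range i, (v j:ℝ)/β^(j+1)
        = ∑ j ∈ Finset.range i, (betaExp β j:ℝ)/β^(j+1) :=
      Finset.sum_congr rfl (fun j hj => by rw [hpre j (Finset.mem_range.mp hj)])
    rw [hsumeq]
    have hvi : (betaExp β i : ℝ) + 1 ≤ (v i : ℝ) := by exact_mod_cast hi
    have hp : (0:ℝ) < β^(i+1) := by positivity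
    have hfrac : betaA β i / β^(i+1) < (v i:ℝ)/β^(i+1) := by
      apply div_lt_div_of_pos_right ?_ hp <;> try linarith
    linarith
  linarith

end AuxStmt15

open Filter Topology

/-- Let `β > 1` and let `a` be the β-expansion of `β`. Then:
(i) every word `v` with `B̂(v) ≤ β` satisfies `v ≤ a` lexicographically;
(ii) every word `v` with `B̂(v) < β` satisfies `v < a` lexicographically;
(iii) for every `k ≥ 1`, `B̂(σ^k a) < β` and `σ^k a < a` lexicographically. -/
theorem stmt_15 (β : ℝ) (hβ : 1 < β) :
    (∀ v : ℕ → ℕ, IsWord v → Bhat v ≤ β → LexLe v (betaExp β)) ∧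
      (∀ v : ℕ → ℕ, IsWord v → Bhat v < β → LexLt v (betaExp β)) ∧
      (∀ k : ℕ, 1 ≤ k →
        Bhat (shift k (betaExp β)) < β ∧ LexLt (shift k (betaExp β)) (betaExp β)) := by
  classical
  have hb0 : (0:ℝ) < β := lt_trans one_pos hβ
  have ha0 : 0 < betaExp β 0 := by
    rw [betaExp]
    have h1 : (1:ℝ) ≤ betaA β 0 := by rw [betaA]; exact hβ.le
    exact Nat.pos_of_ne_zero (fun hz => by
      have := Nat.floor_eq_zero.mp hz
      linarith)
  have hzero_lt : LexLt (fun _ => 0) (betaExp β) :=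
    ⟨0, fun j hj => absurd hj (Nat.not_lt_zero j), ha0⟩
  have part2 : ∀ v : ℕ → ℕ, IsWord v → Bhat v < β → LexLt v (betaExp β) := by
    rintro v ⟨M, hM⟩ hlt
    by_cases hv : v = fun _ => 0
    · rw [hv]; exact hzero_lt
    have hf : fword v β < 1 := fword_lt_one_of_Bhat_lt hM hv hβ hlt
    rcases lex_trichotomy v (betaExp β) with h | h | h
    · exact h
    · rw [h, fword_betaExp hβ] at hf; exact absurd hf (lt_irrefl 1)
    · exact absurd hf (not_lt.mpr (one_lt_fword_of_lex_gt hM hβ h).le)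
  refine ⟨?_, part2, ?_⟩
  · rintro v ⟨M, hM⟩ hle
    by_cases hv : v = fun _ => 0
    · rw [hv]; exact Or.inl hzero_lt
    have hf : fword v β ≤ 1 := fword_le_one_of_Bhat_le hM hv hβ hle
    rcases lex_trichotomy v (betaExp β) with h | h | h
    · exact Or.inl h
    · exact Or.inr h
    · exact absurd hf (not_le.mpr (one_lt_fword_of_lex_gt hM hβ h))
  · intro k hk
    obtain ⟨k', rfl⟩ : ∃ k', k = k' + 1 := ⟨k-1, by omega⟩
    have hMs : ∀ i, shift (k'+1) (betaExp β) i ≤ ⌊β⌋₊ := fun i => betaExp_le hβ _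
    have hfs : fword (shift (k'+1) (betaExp β)) β < 1 := by
      rw [fword_shift_eq hβ, div_lt_one hb0]
      exact betaA_lt hβ k'
    have hB : Bhat (shift (k'+1) (betaExp β)) < β := Bhat_lt_of_fword_lt hMs hβ hfs
    exact ⟨hB, part2 _ ⟨_, hMs⟩ hB⟩
end

section
/- Let w be a word that is not identically zero, and let i ≥ 1. Let u be the word defined by u_j = w_j for 0 ≤ j < i−1, u_{i−1} = w_{i−1} + 1, and u_j = 0 for j ≥ i. Then B̂(σ^i w) ≤ B̂(w) if and only if B̂(w) ≤ B̂(u); likewise, B̂(σ^i w) < B̂(w) if and only if B̂(w) < B̂(u). -/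
section Stmt18Aux

lemma summable_fword {w : ℕ → ℕ} (hw : ∃ M, ∀ i, w i ≤ M) {β : ℝ} (hβ : 1 < β) :
    Summable (fun i : ℕ => (w i : ℝ) / β ^ (i + 1)) := by
  obtain ⟨M, hM⟩ := hw
  have hβ0 : (0:ℝ) < β := by linarith
  have hr : |1/β| < 1 := by
    rw [abs_of_pos (by positivity)]
    rw [div_lt_one hβ0]; linarith
  have hs : Summable (fun i : ℕ => (M:ℝ) * (1/β) ^ (i+1)) :=
    ((summable_geometric_of_abs_lt_one hr).comp_injective (add_left_injective 1)).mul_left _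
  refine hs.of_nonneg_of_le (fun i => by positivity) (fun i => ?_)
  rw [div_pow, one_pow, mul_one_div]
  exact div_le_div_of_nonneg_right (by exact_mod_cast hM i) (by positivity)

lemma fword_nonneg {w : ℕ → ℕ} {β : ℝ} (hβ : 0 < β) : 0 ≤ fword w β :=
  tsum_nonneg fun i => by positivity

lemma fword_pos {w : ℕ → ℕ} (hw : ∃ M, ∀ i, w i ≤ M) (hw0 : w ≠ fun _ => 0) {β : ℝ}
    (hβ : 1 < β) : 0 < fword w β := by
  have hβ0 : (0:ℝ) < β := by linarith
  obtain ⟨j, hj⟩ : ∃ j, w j ≠ 0 := by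
    by_contra h; push_neg at h; exact hw0 (funext h)
  refine Summable.tsum_pos (summable_fword hw hβ) (fun i => by positivity) j ?_
  have : (0:ℝ) < (w j : ℝ) := by exact_mod_cast Nat.pos_of_ne_zero hj
  positivity

lemma fword_anti_s18 {w : ℕ → ℕ} (hw : ∃ M, ∀ i, w i ≤ M) {β₁ β₂ : ℝ} (h1 : 1 < β₁)
    (h12 : β₁ ≤ β₂) : fword w β₂ ≤ fword w β₁ := by
  refine Summable.tsum_le_tsum (fun i => ?_) (summable_fword hw (lt_of_lt_of_le h1 h12))
    (summable_fword hw h1)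
  exact div_le_div_of_nonneg_left (by positivity) (by positivity)
    (pow_le_pow_left₀ (by linarith) h12 _)

lemma fword_strict_anti_s18 {w : ℕ → ℕ} (hw : ∃ M, ∀ i, w i ≤ M) (hw0 : w ≠ fun _ => 0)
    {β₁ β₂ : ℝ} (h1 : 1 < β₁) (h12 : β₁ < β₂) : fword w β₂ < fword w β₁ := by
  have h2 : 1 < β₂ := h1.trans h12
  have key : fword w β₂ ≤ (β₁/β₂) * fword w β₁ := by
    rw [fword, fword, ← tsum_mul_left]
    refine Summable.tsum_le_tsum (fun i => ?_) (summable_fword hw h2)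
      ((summable_fword hw h1).mul_left _)
    rw [div_mul_div_comm, div_le_div_iff₀ (by positivity) (by positivity), pow_succ, pow_succ]
    have hp : β₁ ^ i ≤ β₂ ^ i := pow_le_pow_left₀ (by linarith) h12.le i
    have h0 : (0:ℝ) ≤ (w i : ℝ) := Nat.cast_nonneg _
    nlinarith [mul_le_mul_of_nonneg_left hp (mul_nonneg (mul_nonneg h0 (by linarith : (0:ℝ) ≤ β₂)) (by linarith : (0:ℝ) ≤ β₁))]
  have hpos := fword_pos hw hw0 h1
  have : (β₁/β₂) * fword w β₁ < fword w β₁ := by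
    have : β₁/β₂ < 1 := (div_lt_one (by linarith)).2 h12
    nlinarith
  linarith

lemma fword_le_bound {w : ℕ → ℕ} {M : ℕ} (hM : ∀ i, w i ≤ M) {β : ℝ} (hβ : 1 < β) :
    fword w β ≤ M / (β - 1) := by
  have hβ0 : (0:ℝ) < β := by linarith
  have hr : |1/β| < 1 := by
    rw [abs_of_pos (by positivity), div_lt_one hβ0]; linarith
  have hgeom : Summable (fun i : ℕ => (M:ℝ) * (1/β) ^ (i+1)) :=
    ((summable_geometric_of_abs_lt_one hr).comp_injective (add_left_injective 1)).mul_left _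
  have h1 : fword w β ≤ ∑' i : ℕ, (M:ℝ) * (1/β) ^ (i+1) := by
    refine Summable.tsum_le_tsum (fun i => ?_) (summable_fword ⟨M, hM⟩ hβ) hgeom
    rw [div_pow, one_pow, mul_one_div]
    exact div_le_div_of_nonneg_right (by exact_mod_cast hM i) (by positivity)
  have h2 : ∑' i : ℕ, (M:ℝ) * (1/β) ^ (i+1) = M / (β - 1) := by
    have : ∀ i : ℕ, (M:ℝ) * (1/β) ^ (i+1) = (M * (1/β)) * (1/β)^i := fun i => by ring
    simp_rw [this]
    rw [tsum_mul_left, tsum_geometric_of_lt_one (by positivity) (by rw [div_lt_one hβ0]; linarith)]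
    field_simp
  linarith

def Sset (w : ℕ → ℕ) : Set ℝ := {β : ℝ | 1 < β ∧ fword w β ≤ 1}

lemma Sset_nonempty {w : ℕ → ℕ} (hw : ∃ M, ∀ i, w i ≤ M) : (Sset w).Nonempty := by
  obtain ⟨M, hM⟩ := hw
  have hM1 : (1:ℝ) < M + 2 := by linarith [Nat.cast_nonneg (α := ℝ) M]
  refine ⟨M + 2, hM1, ?_⟩
  have := fword_le_bound hM (β := M + 2) hM1
  have h2 : (M:ℝ) / (M + 2 - 1) ≤ 1 := by
    rw [div_le_one (by linarith)]; linarith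
  linarith

lemma Sset_bddBelow (w : ℕ → ℕ) : BddBelow (Sset w) :=
  ⟨1, fun β hβ => hβ.1.le⟩

lemma Bhat_eq {w : ℕ → ℕ} (hw0 : w ≠ fun _ => 0) : Bhat w = sInf (Sset w) := by
  rw [Bhat, if_neg hw0]; rfl

lemma one_le_Bhat {w : ℕ → ℕ} (hw : ∃ M, ∀ i, w i ≤ M) (hw0 : w ≠ fun _ => 0) :
    1 ≤ Bhat w := by
  rw [Bhat_eq hw0]
  exact le_csInf (Sset_nonempty hw) fun β hβ => hβ.1.le

lemma fword_continuousAt {w : ℕ → ℕ} (hw : ∃ M, ∀ i, w i ≤ M) {β : ℝ} (hβ : 1 < β) :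
    ContinuousAt (fword w) β := by
  obtain ⟨M, hM⟩ := hw
  set β₀ : ℝ := (1 + β) / 2 with hβ₀def
  have hβ₀1 : 1 < β₀ := by rw [hβ₀def]; linarith
  have hβ₀β : β₀ < β := by rw [hβ₀def]; linarith
  have hβ₀0 : (0:ℝ) < β₀ := by linarith
  have hcont : ContinuousOn (fword w) (Set.Ici β₀) := by
    refine continuousOn_tsum (f := fun i (b : ℝ) => (w i : ℝ) / b ^ (i + 1))
      (u := fun i => (M:ℝ) * (1/β₀) ^ (i+1)) (fun i => ?_) ?_ (fun n x hx => ?_)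
    · exact ContinuousOn.div continuousOn_const (by fun_prop)
        (fun x hx => pow_ne_zero _ (ne_of_gt (lt_of_lt_of_le hβ₀0 hx)))
    · have hr : |1/β₀| < 1 := by
        rw [abs_of_pos (by positivity), div_lt_one hβ₀0]; linarith
      exact ((summable_geometric_of_abs_lt_one hr).comp_injective
        (add_left_injective 1)).mul_left _
    · have hx0 : (0:ℝ) < x := lt_of_lt_of_le hβ₀0 hx
      simp only [Real.norm_eq_abs]
      rw [abs_of_nonneg (by positivity), div_pow, one_pow, mul_one_div]
      exact div_le_div₀ (by positivity) (by exact_mod_cast hM n) (by positivity)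
        (pow_le_pow_left₀ (by linarith) hx _)
  exact hcont.continuousAt (Ici_mem_nhds hβ₀β)

lemma le_of_mem_Sset {w : ℕ → ℕ} {β : ℝ} (hβ : β ∈ Sset w) (hw0 : w ≠ fun _ => 0) :
    Bhat w ≤ β := by
  rw [Bhat_eq hw0]; exact csInf_le (Sset_bddBelow w) hβ

lemma fword_le_one_of_lt {w : ℕ → ℕ} (hw : ∃ M, ∀ i, w i ≤ M) (hw0 : w ≠ fun _ => 0)
    {β : ℝ} (hβ : 1 < β) (h : Bhat w < β) : fword w β ≤ 1 := by
  rw [Bhat_eq hw0] at h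
  obtain ⟨β', hβ'S, hβ'β⟩ := exists_lt_of_csInf_lt (Sset_nonempty hw) h
  exact (fword_anti_s18 hw hβ'S.1 hβ'β.le).trans hβ'S.2

lemma Bhat_le_iff {w : ℕ → ℕ} (hw : ∃ M, ∀ i, w i ≤ M) (hw0 : w ≠ fun _ => 0)
    {β : ℝ} (hβ : 1 < β) : fword w β ≤ 1 ↔ Bhat w ≤ β := by
  constructor
  · intro h; exact le_of_mem_Sset ⟨hβ, h⟩ hw0
  · intro h
    rcases lt_or_eq_of_le h with h | h
    · exact fword_le_one_of_lt hw hw0 hβ h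
    · have htend : Filter.Tendsto (fword w) (nhdsWithin β (Set.Ioi β)) (nhds (fword w β)) :=
        ((fword_continuousAt hw hβ).tendsto).mono_left nhdsWithin_le_nhds
      refine le_of_tendsto htend ?_
      filter_upwards [self_mem_nhdsWithin] with x hx
      exact fword_le_one_of_lt hw hw0 (hβ.trans hx) (h ▸ hx)

lemma Bhat_lt_iff {w : ℕ → ℕ} (hw : ∃ M, ∀ i, w i ≤ M) (hw0 : w ≠ fun _ => 0)
    {β : ℝ} (hβ : 1 < β) : fword w β < 1 ↔ Bhat w < β := by
  constructor
  · intro h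
    have htend : Filter.Tendsto (fword w) (nhdsWithin β (Set.Iio β)) (nhds (fword w β)) :=
      ((fword_continuousAt hw hβ).tendsto).mono_left nhdsWithin_le_nhds
    have hev : ∀ᶠ x in nhdsWithin β (Set.Iio β), fword w x < 1 ∧ 1 < x := by
      refine Filter.Eventually.and ?_ ?_
      · exact htend.eventually (gt_mem_nhds h)
      · exact eventually_nhdsWithin_of_eventually_nhds (eventually_gt_nhds hβ)
    obtain ⟨x, ⟨hx1, hx2⟩, hx3⟩ := (hev.and self_mem_nhdsWithin).exists
    calc Bhat w ≤ x := le_of_mem_Sset ⟨hx2, hx1.le⟩ hw0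
    _ < β := hx3
  · intro h
    rw [Bhat_eq hw0] at h
    obtain ⟨β', hβ'S, hβ'β⟩ := exists_lt_of_csInf_lt (Sset_nonempty hw) h
    exact (fword_strict_anti_s18 hw hw0 hβ'S.1 hβ'β).trans_le hβ'S.2

lemma one_lt_Bhat_of_two_le {w : ℕ → ℕ} (hw : ∃ M, ∀ i, w i ≤ M) (hw0 : w ≠ fun _ => 0)
    {N : ℕ} (h2 : 2 ≤ ∑ j ∈ Finset.range N, w j) : 1 < Bhat w := by
  have hcont : ∀ᶠ x in nhds (1:ℝ), x ^ N < 2 := by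
    have h := (continuous_pow (M := ℝ) N).continuousAt (x := 1)
    rw [ContinuousAt, one_pow] at h
    exact h.eventually (gt_mem_nhds (by norm_num))
  obtain ⟨ε, hε, hball⟩ := Metric.eventually_nhds_iff.1 hcont
  have hlb : ∀ β ∈ Sset w, 1 + ε ≤ β := by
    intro β hβ
    by_contra hcon; push_neg at hcon
    have hβ1 : 1 < β := hβ.1
    have hd : dist β 1 < ε := by
      rw [Real.dist_eq, abs_of_pos (by linarith)]; linarith
    have hβN : β ^ N < 2 := hball hd
    have hge : (∑ j ∈ Finset.range N, (w j:ℝ)) / β ^ N ≤ fword w β := by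
      rw [Finset.sum_div]
      refine (Finset.sum_le_sum fun j hj => ?_).trans
        (Summable.sum_le_tsum _ (fun j _ => by positivity) (summable_fword hw hβ1))
      exact div_le_div_of_nonneg_left (by positivity) (by positivity)
        (pow_le_pow_right₀ hβ1.le (by simpa using Finset.mem_range.1 hj))
    have hc2 : (2:ℝ) ≤ ∑ j ∈ Finset.range N, (w j:ℝ) := by exact_mod_cast h2
    have hpN : (0:ℝ) < β ^ N := by positivity
    have h21 : (2:ℝ) / β ^ N ≤ 1 := by
      calc (2:ℝ)/β^N ≤ (∑ j ∈ Finset.range N, (w j:ℝ))/β^N := (div_le_div_iff_of_pos_right hpN).2 hc2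
      _ ≤ fword w β := hge
      _ ≤ 1 := hβ.2
    rw [div_le_one hpN] at h21
    linarith
  have : 1 + ε ≤ Bhat w := by
    rw [Bhat_eq hw0]; exact le_csInf (Sset_nonempty hw) hlb
  linarith

lemma fword_split {w : ℕ → ℕ} (hw : ∃ M, ∀ i, w i ≤ M) {β : ℝ} (hβ : 1 < β) (i : ℕ) :
    fword w β = (∑ j ∈ Finset.range i, (w j : ℝ) / β ^ (j + 1))
      + (1 / β ^ i) * fword (shift i w) β := by
  have hβ0 : (0:ℝ) < β := by linarith
  rw [fword, ← Summable.sum_add_tsum_nat_add i (summable_fword hw hβ)]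
  congr 1
  rw [fword, ← tsum_mul_left]
  refine tsum_congr fun j => ?_
  show ((w (j + i) : ℝ)) / β ^ (j + i + 1) = 1 / β ^ i * ((shift i w j : ℝ) / β ^ (j + 1))
  rw [shift]
  rw [show j + i + 1 = i + (j + 1) by ring, pow_add]
  field_simp

lemma fword_u {w u : ℕ → ℕ} {i : ℕ} (hi : 1 ≤ i)
    (hu : ∀ j : ℕ, u j = if j < i - 1 then w j else if j = i - 1 then w (i - 1) + 1 else 0)
    (hub : ∃ M, ∀ j, u j ≤ M) {β : ℝ} (hβ : 1 < β) :
    fword u β = (∑ j ∈ Finset.range i, (w j : ℝ) / β ^ (j + 1)) + 1 / β ^ i := by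
  obtain ⟨k, rfl⟩ : ∃ k, i = k + 1 := ⟨i - 1, (Nat.succ_pred_eq_of_pos hi).symm⟩
  have hik : k + 1 - 1 = k := rfl
  have hβ0 : (0:ℝ) < β := by linarith
  have htail : ∀ j : ℕ, (u (j + (k + 1)) : ℝ) / β ^ (j + (k + 1) + 1) = 0 := by
    intro j
    rw [hu]
    simp only [hik]
    rw [if_neg (by omega), if_neg (by omega)]
    simp
  rw [fword, ← Summable.sum_add_tsum_nat_add (k + 1) (summable_fword hub hβ)]
  rw [tsum_congr htail, tsum_zero, add_zero]
  rw [Finset.sum_range_succ, Finset.sum_range_succ]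
  have h1 : ∀ j ∈ Finset.range k, (u j : ℝ) / β ^ (j + 1) = (w j : ℝ) / β ^ (j + 1) := by
    intro j hj
    rw [hu, if_pos (by simpa [hik] using Finset.mem_range.1 hj)]
  rw [Finset.sum_congr rfl h1]
  have h2 : (u k : ℝ) = (w k : ℝ) + 1 := by
    rw [hu, if_neg (by omega), if_pos (by omega)]
    simp [hik]
  rw [h2]
  ring

lemma sum_u_nat {w u : ℕ → ℕ} {i : ℕ} (hi : 1 ≤ i)
    (hu : ∀ j : ℕ, u j = if j < i - 1 then w j else if j = i - 1 then w (i - 1) + 1 else 0) :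
    ∑ j ∈ Finset.range i, u j = (∑ j ∈ Finset.range i, w j) + 1 := by
  obtain ⟨k, rfl⟩ : ∃ k, i = k + 1 := ⟨i - 1, (Nat.succ_pred_eq_of_pos hi).symm⟩
  have hik : k + 1 - 1 = k := rfl
  rw [Finset.sum_range_succ, Finset.sum_range_succ]
  have h1 : ∀ j ∈ Finset.range k, u j = w j := by
    intro j hj
    rw [hu, if_pos (by simpa [hik] using Finset.mem_range.1 hj)]
  rw [Finset.sum_congr rfl h1, hu, if_neg (by omega), if_pos (by omega)]
  simp only [hik]
  ring

lemma Bhat_eq_one_of_small {w : ℕ → ℕ} (hw0 : w ≠ fun _ => 0)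
    (h : ∀ β : ℝ, 1 < β → fword w β < 1) : Bhat w = 1 := by
  rw [Bhat_eq hw0]
  have hS : Sset w = Set.Ioi 1 :=
    Set.ext fun β => ⟨fun hb => hb.1, fun hb => ⟨hb, (h β hb).le⟩⟩
  rw [hS]
  exact csInf_Ioi

end Stmt18Aux

/-- Let `w` be a word that is not identically zero and `i ≥ 1`. Let `u` be the
word `w_0 … w_{i-2} (w_{i-1}+1) 0^∞`. Then `B̂(σ^i w) ≤ B̂(w)` iff `B̂(w) ≤ B̂(u)`;
likewise, `B̂(σ^i w) < B̂(w)` iff `B̂(w) < B̂(u)`. -/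
theorem stmt_18 (w : ℕ → ℕ) (hw : IsWord w) (hw0 : w ≠ fun _ => 0)
    (i : ℕ) (hi : 1 ≤ i) (u : ℕ → ℕ)
    (hu : ∀ j : ℕ, u j =
      if j < i - 1 then w j else if j = i - 1 then w (i - 1) + 1 else 0) :
    (Bhat (shift i w) ≤ Bhat w ↔ Bhat w ≤ Bhat u) ∧
      (Bhat (shift i w) < Bhat w ↔ Bhat w < Bhat u) := by
  obtain ⟨M, hM⟩ := hw
  have hwB : ∃ M, ∀ j, w j ≤ M := ⟨M, hM⟩
  have hsB : ∃ M', ∀ j, shift i w j ≤ M' := ⟨M, fun j => hM _⟩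
  have huB : ∃ M', ∀ j, u j ≤ M' := by
    refine ⟨M + 1, fun j => ?_⟩
    rw [hu]
    split_ifs
    · exact (hM j).trans (Nat.le_succ M)
    · exact Nat.succ_le_succ (hM _)
    · exact Nat.zero_le _
  have hu0 : u ≠ fun _ => 0 := by
    intro h
    have h1 := congrFun h (i - 1)
    rw [hu (i-1), if_neg (lt_irrefl _), if_pos rfl] at h1
    simp at h1
  have hb1 : 1 ≤ Bhat w := one_le_Bhat hwB hw0
  by_cases hs0 : shift i w = fun _ => 0
  · -- Case A : the shifted word is zero
    have hBs : Bhat (shift i w) = 0 := by rw [Bhat, if_pos hs0]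
    obtain ⟨j0, hj0⟩ : ∃ j, w j ≠ 0 := by
      by_contra h; push_neg at h; exact hw0 (funext h)
    have hj0i : j0 < i := by
      by_contra h
      push_neg at h
      have h2 := congrFun hs0 (j0 - i)
      rw [shift] at h2
      rw [Nat.sub_add_cancel h] at h2
      exact hj0 h2
    have hsum : 2 ≤ ∑ j ∈ Finset.range i, u j := by
      rw [sum_u_nat hi hu]
      have h1 : 1 ≤ ∑ j ∈ Finset.range i, w j :=
        le_trans (Nat.one_le_iff_ne_zero.2 hj0)
          (Finset.single_le_sum (fun _ _ => Nat.zero_le _) (Finset.mem_range.2 hj0i))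
      omega
    have ht : 1 < Bhat u := one_lt_Bhat_of_two_le huB hu0 hsum
    have hfu : fword u (Bhat u) ≤ 1 := (Bhat_le_iff huB hu0 ht).2 le_rfl
    have hfs : fword (shift i w) (Bhat u) = 0 := by rw [hs0]; simp [fword]
    have hpow : (0:ℝ) < 1 / (Bhat u) ^ i := by positivity
    have heq : fword w (Bhat u) = fword u (Bhat u) - 1 / (Bhat u) ^ i := by
      rw [fword_split hwB ht i, hfs, fword_u hi hu huB ht]
      ring
    have hfw : fword w (Bhat u) < 1 := by rw [heq]; linarith
    have hbt : Bhat w < Bhat u := (Bhat_lt_iff hwB hw0 ht).1 hfw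
    rw [hBs]
    exact ⟨iff_of_true (by linarith) hbt.le, iff_of_true (by linarith) hbt⟩
  · -- Case B : the shifted word is nonzero
    rcases lt_or_eq_of_le hb1 with hb | hb
    · -- Case B1 : 1 < Bhat w
      have hfw1 : fword w (Bhat w) = 1 := by
        refine le_antisymm ((Bhat_le_iff hwB hw0 hb).2 le_rfl) ?_
        by_contra h
        push_neg at h
        exact lt_irrefl (Bhat w) ((Bhat_lt_iff hwB hw0 hb).1 h)
      have hsplit := fword_split hwB hb i
      have hfueq := fword_u hi hu huB hb
      have hpow : (0:ℝ) < 1 / (Bhat w) ^ i := by positivity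
      have key : fword u (Bhat w) - 1
          = (1 / (Bhat w) ^ i) * (1 - fword (shift i w) (Bhat w)) := by
        have hP : (∑ j ∈ Finset.range i, (w j : ℝ) / (Bhat w) ^ (j + 1))
            = 1 - (1 / (Bhat w) ^ i) * fword (shift i w) (Bhat w) := by
          rw [hsplit] at hfw1; linarith
        rw [hfueq, hP]; ring
      constructor
      · have h2 : Bhat w ≤ Bhat u ↔ 1 ≤ fword u (Bhat w) := by
          rw [← not_lt (a := Bhat u) (b := Bhat w), ← not_lt (a := fword u (Bhat w)) (b := 1)]
          exact not_congr (Bhat_lt_iff huB hu0 hb).symm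
        rw [← Bhat_le_iff hsB hs0 hb, h2]
        constructor <;> intro h <;> nlinarith [key, hpow]
      · have h2 : Bhat w < Bhat u ↔ 1 < fword u (Bhat w) := by
          rw [← not_le (a := Bhat u) (b := Bhat w), ← not_le (a := fword u (Bhat w)) (b := 1)]
          exact not_congr (Bhat_le_iff huB hu0 hb).symm
        rw [← Bhat_lt_iff hsB hs0 hb, h2]
        constructor <;> intro h <;> nlinarith [key, hpow]
    · -- Case B2 : Bhat w = 1, so w has a single letter 1
      have hble : ∀ N, ∑ j ∈ Finset.range N, w j ≤ 1 := by
        intro N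
        by_contra hcon
        push_neg at hcon
        have h1 := one_lt_Bhat_of_two_le hwB hw0 (N := N) (by omega)
        rw [← hb] at h1
        exact lt_irrefl 1 h1
      obtain ⟨j', hj'⟩ : ∃ j, shift i w j ≠ 0 := by
        by_contra h; push_neg at h; exact hs0 (funext h)
      rw [shift] at hj'
      set k := j' + i with hk
      have hwk1 : w k = 1 := by
        have h1 : w k ≤ ∑ j ∈ Finset.range (k+1), w j :=
          Finset.single_le_sum (fun _ _ => Nat.zero_le _) (Finset.mem_range.2 (Nat.lt_succ_self k))
        have h2 := hble (k+1)
        omega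
      have hzero : ∀ m, m ≠ k → w m = 0 := by
        intro m hm
        have hsub : ({m, k} : Finset ℕ) ⊆ Finset.range (max m k + 1) := by
          intro x hx
          simp only [Finset.mem_insert, Finset.mem_singleton] at hx
          rcases hx with rfl | rfl <;> simp [Finset.mem_range] <;> omega
        have hps : w m + w k ≤ ∑ j ∈ Finset.range (max m k + 1), w j := by
          rw [← Finset.sum_pair hm]
          exact Finset.sum_le_sum_of_subset hsub
        have h2 := hble (max m k + 1)
        omega
      have hki : i ≤ k := Nat.le_add_left i j'
      have hs_small : ∀ β : ℝ, 1 < β → fword (shift i w) β < 1 := by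
        intro β hβ
        have hβ0 : (0:ℝ) < β := by linarith
        have heq : fword (shift i w) β = 1 / β ^ (j' + 1) := by
          rw [fword]
          rw [tsum_eq_single j' (fun j hj => by
            rw [shift, hzero (j + i) (by omega), Nat.cast_zero, zero_div])]
          rw [shift, show j' + i = k from rfl, hwk1]
          norm_num
        rw [heq, div_lt_one (by positivity)]
        exact one_lt_pow₀ hβ (Nat.succ_ne_zero j')
      have hBs : Bhat (shift i w) = 1 := Bhat_eq_one_of_small hs0 hs_small
      have hu_small : ∀ β : ℝ, 1 < β → fword u β < 1 := by
        intro β hβ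
        have hβ0 : (0:ℝ) < β := by linarith
        have heq : fword u β = 1 / β ^ (i - 1 + 1) := by
          rw [fword]
          rw [tsum_eq_single (i-1) (fun j hj => by
            rw [hu]
            by_cases hji : j < i - 1
            · rw [if_pos hji, hzero j (by omega), Nat.cast_zero, zero_div]
            · rw [if_neg hji, if_neg hj]
              simp)]
          rw [hu, if_neg (lt_irrefl _), if_pos rfl, hzero (i-1) (by omega)]
          norm_num
        rw [heq, div_lt_one (by positivity)]
        exact one_lt_pow₀ hβ (Nat.succ_ne_zero _)
      have hBu : Bhat u = 1 := Bhat_eq_one_of_small hu0 hu_small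
      rw [hBs, hBu, ← hb]
      simp
end
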